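/- Let P be a rooted tree poset with m ≥ 2 vertices. Then the number of upper order ideals of P satisfies m + 1 ≤ #(upper order ideals of P) ≤ 2^{m−1} + 1. Moreover, the lower bound is attained exactly when P is isomorphic to the chain with m elements, and the upper bound is attained exactly when P is isomorphic to the m-th shrub S_m. -/

import Mathlib

/-- A subset `W` of `α` is an upper order ideal with respect to the order relation `le`
if it is upward closed. -/
def IsUpperIdeal {α : Type*} (le : α → α → Prop) (W : Set α) : Prop :=
  ∀ ⦃x⦄, x ∈ W → ∀ ⦃y⦄, le x y → y ∈ W

/-- The order relation of the `m`-th shrub `S_m` on `Fin m`: the element `ε_1` (index `0`)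
is below every other element, and the elements `ε_2, …, ε_m` are pairwise incomparable. -/
def shrubLE (m : ℕ) : Fin m → Fin m → Prop :=
  fun a b => a = b ∨ a.val = 0

/-- Let `P` be a rooted tree poset with `m ≥ 2` vertices (a finite poset
with a least element `root` such that every other element covers a unique element).  Then the
number of upper order ideals of `P` lies between `m + 1` and `2^(m-1) + 1`; the lower bound
is attained exactly when `P` is isomorphic to the chain with `m` elements, and the upper
bound is attained exactly when `P` is isomorphic to the `m`-th shrub `S_m`. -/
theorem stmt16 (m : ℕ) (hm : 2 ≤ m)
    (α : Type) [Fintype α] [PartialOrder α] (hcard : Fintype.card α = m)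
    (root : α) (hroot : ∀ x : α, root ≤ x)
    (htree : ∀ y : α, y ≠ root → ∃! x : α, x ⋖ y) :
    (m + 1 ≤ Nat.card {W : Set α // IsUpperIdeal (fun a b : α => a ≤ b) W} ∧
      Nat.card {W : Set α // IsUpperIdeal (fun a b : α => a ≤ b) W} ≤ 2 ^ (m - 1) + 1) ∧
    (Nat.card {W : Set α // IsUpperIdeal (fun a b : α => a ≤ b) W} = m + 1 ↔
      Nonempty (α ≃o Fin m)) ∧
    (Nat.card {W : Set α // IsUpperIdeal (fun a b : α => a ≤ b) W} = 2 ^ (m - 1) + 1 ↔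
      ∃ e : α ≃ Fin m, ∀ a b : α, a ≤ b ↔ shrubLE m (e a) (e b)) := by
  classical
  haveI : NeZero m := ⟨by omega⟩
  set U := {W : Set α // IsUpperIdeal (fun a b : α => a ≤ b) W} with hUdef
  letI : Fintype U := Fintype.ofFinite U
  have hNcard : Nat.card U = Fintype.card U := Nat.card_eq_fintype_card
  -- basic upper-ideal facts
  have hIci : ∀ a : α, IsUpperIdeal (fun a b : α => a ≤ b) (Set.Ici a) := by
    intro a x hx y hxy; exact le_trans hx hxy
  have hEmpty : IsUpperIdeal (fun a b : α => a ≤ b) (∅ : Set α) := by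
    intro x hx; exact absurd hx (Set.notMem_empty x)
  have hUniv : IsUpperIdeal (fun a b : α => a ≤ b) (Set.univ : Set α) := by
    intro x _ y _; trivial
  -- the injection witnessing the lower bound
  let f : Option α → U := fun o => o.elim ⟨∅, hEmpty⟩ (fun a => ⟨Set.Ici a, hIci a⟩)
  have hIciNe : ∀ a : α, (Set.Ici a : Set α) ≠ ∅ := fun a => (Set.nonempty_Ici).ne_empty
  have hfinj : Function.Injective f := by
    rintro (_ | a) (_ | b) h
    · rfl
    · exact absurd (congrArg Subtype.val h).symm (hIciNe b)
    · exact absurd (congrArg Subtype.val h) (hIciNe a)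
    · exact congrArg some (Set.Ici_injective (congrArg Subtype.val h))
  have hlow : m + 1 ≤ Fintype.card U := by
    have := Fintype.card_le_of_injective f hfinj
    simpa [Fintype.card_option, hcard] using this
  -- the injection witnessing the upper bound
  have hroot_mem : ∀ (W : Set α), IsUpperIdeal (fun a b : α => a ≤ b) W → root ∈ W →
      W = Set.univ := by
    intro W hW h
    ext x; simp only [Set.mem_univ, iff_true]
    exact hW h (hroot x)
  let g : U → Option (Set {x : α // x ≠ root}) :=
    fun W => if root ∈ W.1 then none else some (Subtype.val ⁻¹' W.1)
  have hginj : Function.Injective g := by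
    intro W₁ W₂ h
    simp only [g] at h
    by_cases h1 : root ∈ W₁.1 <;> by_cases h2 : root ∈ W₂.1
    · exact Subtype.ext ((hroot_mem _ W₁.2 h1).trans (hroot_mem _ W₂.2 h2).symm)
    · rw [if_pos h1, if_neg h2] at h; exact nomatch h
    · rw [if_neg h1, if_pos h2] at h; exact nomatch h
    · rw [if_neg h1, if_neg h2] at h
      apply Subtype.ext
      have hpre := Option.some_injective _ h
      ext x
      by_cases hx : x = root
      · subst hx; simp [h1, h2]
      · exact Set.ext_iff.mp hpre ⟨x, hx⟩
  have hβcard : Fintype.card {x : α // x ≠ root} = m - 1 := by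
    rw [Fintype.card_subtype_compl, Fintype.card_subtype_eq, hcard]
  have hcardOpt : Fintype.card (Option (Set {x : α // x ≠ root})) = 2 ^ (m - 1) + 1 := by
    rw [Fintype.card_option, Fintype.card_set, hβcard]
  have hhigh : Fintype.card U ≤ 2 ^ (m - 1) + 1 := by
    have := Fintype.card_le_of_injective g hginj
    rwa [hcardOpt] at this
  -- chain: total order gives exactly m + 1 upper ideals
  have chain_count : (∀ a b : α, a ≤ b ∨ b ≤ a) → Fintype.card U = m + 1 := by
    intro htot
    have hfsurj : Function.Surjective f := by
      intro W
      by_cases hW : W.1 = ∅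
      · exact ⟨none, Subtype.ext hW.symm⟩
      · have hne : (Set.toFinite W.1).toFinset.Nonempty := by
          rw [Set.Finite.toFinset_nonempty]
          exact Set.nonempty_iff_ne_empty.mpr hW
        obtain ⟨a, haW, hamin⟩ : ∃ a ∈ (Set.toFinite W.1).toFinset, ∀ x ∈ (Set.toFinite W.1).toFinset, ¬ x < a := by
            obtain ⟨a, ha⟩ := Finset.exists_minimal hne
            exact ⟨a, ha.prop, fun x hx => ha.not_lt hx⟩
        rw [Set.Finite.mem_toFinset] at haW
        refine ⟨some a, Subtype.ext ?_⟩
        show Set.Ici a = W.1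
        apply Set.eq_of_subset_of_subset
        · intro x hx; exact W.2 haW hx
        · intro x hx
          rcases htot a x with h | h
          · exact h
          · have := hamin x (by rwa [Set.Finite.mem_toFinset])
            have hxa : x = a := by
              by_contra hne'
              exact this (lt_of_le_of_ne h hne')
            rw [Set.mem_Ici, hxa]
    have := Fintype.card_of_bijective ⟨hfinj, hfsurj⟩
    rw [← this, Fintype.card_option, hcard]
  -- not a chain: at least m + 2 upper ideals
  have not_chain : (¬ ∀ a b : α, a ≤ b ∨ b ≤ a) → m + 2 ≤ Fintype.card U := by
    intro h
    push_neg at h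
    obtain ⟨a, b, hab, hba⟩ := h
    have hW0 : IsUpperIdeal (fun a b : α => a ≤ b) (Set.Ici a ∪ Set.Ici b) := by
      rintro x (hx | hx) y hxy
      · exact Or.inl (le_trans hx hxy)
      · exact Or.inr (le_trans hx hxy)
    have hW0ne : ∀ c : α, Set.Ici a ∪ Set.Ici b ≠ Set.Ici c := by
      intro c hc
      have hca : c ≤ a := by
        have : a ∈ Set.Ici c := by rw [← hc]; exact Or.inl le_rfl
        exact this
      have hcb : c ≤ b := by
        have : b ∈ Set.Ici c := by rw [← hc]; exact Or.inr le_rfl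
        exact this
      have : c ∈ Set.Ici a ∪ Set.Ici b := by rw [hc]; exact le_rfl
      rcases this with h' | h'
      · exact hab (le_trans h' hcb)
      · exact hba (le_trans h' hca)
    have hW0empty : (Set.Ici a ∪ Set.Ici b : Set α) ≠ ∅ := by
      intro h
      have : a ∈ (∅ : Set α) := h ▸ (Or.inl le_rfl : a ∈ Set.Ici a ∪ Set.Ici b)
      exact this
    let f2 : Option (Option α) → U := fun o => o.elim ⟨Set.Ici a ∪ Set.Ici b, hW0⟩ f
    have hf2inj : Function.Injective f2 := by
      rintro (_ | o₁) (_ | o₂) h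
      · rfl
      · exfalso
        have hv : (Set.Ici a ∪ Set.Ici b : Set α) = (f o₂).1 := congrArg Subtype.val h
        match o₂, hv with
        | none, hv => exact hW0empty hv
        | some c, hv => exact hW0ne c hv
      · exfalso
        have hv : (Set.Ici a ∪ Set.Ici b : Set α) = (f o₁).1 := (congrArg Subtype.val h).symm
        match o₁, hv with
        | none, hv => exact hW0empty hv
        | some c, hv => exact hW0ne c hv
      · exact congrArg some (hfinj h)
    have := Fintype.card_le_of_injective f2 hf2inj
    simp [Fintype.card_option, hcard] at this; omega
  -- totality from an order isomorphism with `Fin m`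
  have tot_of_iso : Nonempty (α ≃o Fin m) → ∀ a b : α, a ≤ b ∨ b ≤ a := by
    rintro ⟨e⟩ a b
    rcases le_total (e a) (e b) with h | h
    · exact Or.inl (e.le_iff_le.mp h)
    · exact Or.inr (e.le_iff_le.mp h)
  have iso_of_tot : (∀ a b : α, a ≤ b ∨ b ≤ a) → Nonempty (α ≃o Fin m) := by
    intro htot
    letI : LinearOrder α :=
      { (inferInstance : PartialOrder α) with
        le_total := htot
        toDecidableLE := fun a b => Classical.dec _
        toDecidableEq := fun a b => Classical.dec _
        toDecidableLT := fun a b => Classical.dec _ }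
    exact ⟨(monoEquivOfFin α hcard).symm⟩
  -- shrub: the antichain property gives exactly 2^(m-1) + 1 upper ideals
  have shrub_count : (∀ a b : α, a ≤ b → a = root ∨ a = b) →
      Fintype.card U = 2 ^ (m - 1) + 1 := by
    intro hanti
    have hgsurj : Function.Surjective g := by
      rintro (_ | S)
      · exact ⟨⟨Set.univ, hUniv⟩, by simp [g]⟩
      · refine ⟨⟨Subtype.val '' S, ?_⟩, ?_⟩
        · rintro x hx y hxy
          obtain ⟨⟨x', hx'⟩, hx'S, rfl⟩ := hx
          rcases hanti _ _ hxy with h | h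
          · exact absurd h hx'
          · rw [← h]; exact ⟨⟨x', hx'⟩, hx'S, rfl⟩
        · have hrn : root ∉ Subtype.val '' S := by
            rintro ⟨⟨x, hx⟩, -, h⟩; exact hx h
          simp only [g, if_neg hrn]
          rw [Set.preimage_image_eq S Subtype.val_injective]
    exact (Fintype.card_of_bijective ⟨hginj, hgsurj⟩).trans hcardOpt
  have shrub_strict : (¬ ∀ a b : α, a ≤ b → a = root ∨ a = b) →
      Fintype.card U < 2 ^ (m - 1) + 1 := by
    intro h
    push_neg at h
    obtain ⟨a, b, hab, haroot, habne⟩ := h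
    have hbroot : b ≠ root := by
      intro hb
      exact haroot (le_antisymm (hb ▸ hab) (hroot a))
    have hnotmem : some ({⟨a, haroot⟩} : Set {x : α // x ≠ root}) ∉ Set.range g := by
      rintro ⟨⟨W, hW⟩, hgW⟩
      simp only [g] at hgW
      by_cases h1 : root ∈ W
      · rw [if_pos h1] at hgW; exact nomatch hgW
      · rw [if_neg h1] at hgW
        have hpre := Option.some_injective _ hgW
        have haW : a ∈ W := by
          have : (⟨a, haroot⟩ : {x : α // x ≠ root}) ∈ Subtype.val ⁻¹' W := by
            rw [hpre]; exact rfl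
          exact this
        have hbW : b ∈ W := hW haW hab
        have hmem : (⟨b, hbroot⟩ : {x : α // x ≠ root}) ∈
            ({⟨a, haroot⟩} : Set {x : α // x ≠ root}) := by
          rw [← hpre]; exact hbW
        rw [Set.mem_singleton_iff] at hmem
        exact habne (congrArg Subtype.val hmem).symm
    have := Fintype.card_lt_of_injective_of_notMem g hginj hnotmem
    rwa [hcardOpt] at this
  have shrub_of : (∀ a b : α, a ≤ b → a = root ∨ a = b) →
      ∃ e : α ≃ Fin m, ∀ a b : α, a ≤ b ↔ shrubLE m (e a) (e b) := by
    intro hanti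
    let e0 : α ≃ Fin m := Fintype.equivFinOfCardEq hcard
    let e : α ≃ Fin m := e0.trans (Equiv.swap (e0 root) 0)
    have heroot : e root = 0 := by
      show Equiv.swap (e0 root) 0 (e0 root) = 0
      exact Equiv.swap_apply_left _ _
    refine ⟨e, fun a b => ?_⟩
    unfold shrubLE
    constructor
    · intro hab
      rcases hanti a b hab with h | h
      · right; rw [h, heroot]; simp
      · left; rw [h]
    · rintro (h | h)
      · rw [e.injective h]
      · have h0 : e a = 0 := Fin.ext (by simpa using h)
        have : a = root := e.injective (h0.trans heroot.symm)
        rw [this]; exact hroot b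
  have of_shrub : (∃ e : α ≃ Fin m, ∀ a b : α, a ≤ b ↔ shrubLE m (e a) (e b)) →
      ∀ a b : α, a ≤ b → a = root ∨ a = b := by
    rintro ⟨e, he⟩
    have heroot : e root = 0 := by
      have h0 := (he root (e.symm 0)).mp (hroot _)
      unfold shrubLE at h0
      rcases h0 with h | h
      · rw [h, e.apply_symm_apply]
      · exact Fin.ext (by simpa using h)
    intro a b hab
    rcases (he a b).mp hab with h | h
    · right; exact e.injective h
    · left
      refine e.injective ?_
      rw [heroot]
      exact Fin.ext (by simpa using h)
  -- assemble
  refine ⟨⟨by rw [hNcard]; exact hlow, by rw [hNcard]; exact hhigh⟩, ?_, ?_⟩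
  · constructor
    · intro hN
      rw [hNcard] at hN
      refine iso_of_tot ?_
      by_contra htot
      have := not_chain htot
      omega
    · rintro ⟨e⟩
      rw [hNcard]
      exact chain_count (tot_of_iso ⟨e⟩)
  · constructor
    · intro hN
      rw [hNcard] at hN
      refine shrub_of ?_
      by_contra h
      have := shrub_strict h
      omega
    · intro he
      rw [hNcard]
      exact shrub_count (of_shrub he)
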